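/- Let f(x) = λx + Σ_{i≥2} a_i x^i ∈ ℂ_p[[x]] with λ not a root of unity and |λ| = 1, a = sup_{i≥2}|a_i|^{1/(i-1)}, and let g(x) = x + Σ_{k≥2} b_k x^k be the formal solution of g∘f = λg with g(0)=0, g'(0)=1. Then for all k ≥ 2, |b_k| ≤ a^{k-1} / Π_{n=1}^{k-1} |1 - λ^n|. -/

import Mathlib

open scoped BigOperators

/-- Coefficient bound for the formal Schröder conjugacy. Let `f(x) = λx + Σ_{i≥2} a_i x^i`
over `ℂ_p` (modelled as a complete algebraically closed non-Archimedean field of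
characteristic zero with `‖p‖ = 1/p`), with `|λ| = 1` and `λ` not a root of unity, and
`a = sup_{i≥2} |a_i|^(1/(i-1))`. Let `g(x) = x + Σ_{k≥2} b_k x^k` be the formal solution of
the Schröder equation `g ∘ f = λ g` (expressed coefficientwise: the `k`-th coefficient of
`Σ_l b_l f(x)^l` equals `λ b_k`). Then `|b_k| ≤ a^(k-1) / Π_{n=1}^{k-1} |1 - λ^n|`. -/
theorem schroder_coeff_bound (p : ℕ) (hp : p.Prime) (K : Type*)
    [NormedField K] [IsUltrametricDist K] [CompleteSpace K] [IsAlgClosed K] [CharZero K]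
    (hK : ‖(p : K)‖ = 1 / p)
    (lam : K) (hlam : ‖lam‖ = 1) (hroot : ∀ k : ℕ, 0 < k → lam ^ k ≠ 1)
    (c : ℕ → K) (hc0 : c 0 = 0) (hc1 : c 1 = lam)
    (a : ℝ)
    (ha : IsLUB {r : ℝ | ∃ i : ℕ, 2 ≤ i ∧ r = ‖c i‖ ^ ((1 : ℝ) / ((i : ℝ) - 1))} a)
    (b : ℕ → K) (hb0 : b 0 = 0) (hb1 : b 1 = 1)
    (hschroder : ∀ k : ℕ,
      (∑ l ∈ Finset.range (k + 1),
          b l * PowerSeries.coeff (R := K) k ((PowerSeries.mk c) ^ l)) = lam * b k) :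
    ∀ k : ℕ, 2 ≤ k →
      ‖b k‖ ≤ a ^ (k - 1) / ∏ n ∈ Finset.Icc 1 (k - 1), ‖1 - lam ^ n‖ := by
  -- a is nonnegative
  have ha0 : 0 ≤ a := by
    have hmem : ‖c 2‖ ^ ((1 : ℝ) / ((2 : ℝ) - 1)) ≤ a := ha.1 ⟨2, le_refl 2, by norm_num⟩
    exact le_trans (Real.rpow_nonneg (norm_nonneg _) _) hmem
  -- coefficient bound for f
  have hci : ∀ i : ℕ, 1 ≤ i → ‖c i‖ ≤ a ^ (i - 1) := by
    intro i hi
    rcases eq_or_lt_of_le hi with h1 | h2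
    · rw [← h1, hc1, hlam]; norm_num
    · have hi2 : 2 ≤ i := h2
      set n : ℕ := i - 1 with hn
      have hn1 : 1 ≤ n := by omega
      have hcast : (i : ℝ) - 1 = (n : ℝ) := by
        have : (i : ℝ) = (n : ℝ) + 1 := by
          have : i = n + 1 := by omega
          rw [this]; push_cast; ring
        rw [this]; ring
      have hle : ‖c i‖ ^ ((n : ℝ)⁻¹) ≤ a := by
        have := ha.1 ⟨i, hi2, rfl⟩
        rwa [hcast, one_div] at this
      calc ‖c i‖ = (‖c i‖ ^ ((n : ℝ)⁻¹)) ^ n :=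
            (Real.rpow_inv_natCast_pow (norm_nonneg _) (by omega)).symm
        _ ≤ a ^ n := pow_le_pow_left₀ (Real.rpow_nonneg (norm_nonneg _) _) hle n
  -- each factor ‖1 - λ^n‖ lies in (0, 1]
  have hfac_le : ∀ n : ℕ, ‖1 - lam ^ n‖ ≤ 1 := by
    intro n
    rw [sub_eq_add_neg]
    refine le_trans (IsUltrametricDist.norm_add_le_max 1 (-(lam ^ n))) ?_
    simp [norm_pow, hlam]
  have hfac_pos : ∀ n : ℕ, 1 ≤ n → 0 < ‖1 - lam ^ n‖ := by
    intro n hn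
    rw [norm_pos_iff, sub_ne_zero]
    exact fun h => hroot n hn h.symm
  have hprod_pos : ∀ m : ℕ, 0 < ∏ n ∈ Finset.Icc 1 m, ‖1 - lam ^ n‖ := by
    intro m
    apply Finset.prod_pos
    intro n hn
    exact hfac_pos n (Finset.mem_Icc.mp hn).1
  -- antitone: Π_{1..m'} ≤ Π_{1..m} for m ≤ m'
  have hprod_anti : ∀ m m' : ℕ, m ≤ m' →
      (∏ n ∈ Finset.Icc 1 m', ‖1 - lam ^ n‖) ≤ ∏ n ∈ Finset.Icc 1 m, ‖1 - lam ^ n‖ := by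
    intro m m' hmm
    have h1 : Finset.Icc 1 m' = Finset.Ioc 0 m' := by rw [← Finset.Icc_add_one_left_eq_Ioc]; rfl
    have h2 : Finset.Icc 1 m = Finset.Ioc 0 m := by rw [← Finset.Icc_add_one_left_eq_Ioc]; rfl
    rw [h1, h2, ← Finset.prod_Ioc_consecutive _ (Nat.zero_le m) hmm]
    apply mul_le_of_le_one_right (le_of_lt (by rw [← h2]; exact hprod_pos m))
    exact Finset.prod_le_one (fun i _ => norm_nonneg _) (fun i _ => hfac_le i)
  -- vanishing of low coefficients of f^l
  have hzero : ∀ l : ℕ, ∀ j < l, (PowerSeries.coeff (R := K) j) ((PowerSeries.mk c) ^ l) = 0 := by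
    intro l
    induction l with
    | zero => intro j hj; omega
    | succ l ih =>
      intro j hj
      rw [pow_succ', PowerSeries.coeff_mul]
      apply Finset.sum_eq_zero
      intro x hx
      rw [Finset.HasAntidiagonal.mem_antidiagonal] at hx
      rcases Nat.eq_zero_or_pos x.1 with h0 | h1
      · simp [PowerSeries.coeff_mk, h0, hc0]
      · rw [ih x.2 (by omega), mul_zero]
  -- norm bound for coefficients of f^l
  have hbound : ∀ l j : ℕ, l ≤ j →
      ‖(PowerSeries.coeff (R := K) j) ((PowerSeries.mk c) ^ l)‖ ≤ a ^ (j - l) := by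
    intro l
    induction l with
    | zero =>
      intro j _
      rw [pow_zero, PowerSeries.coeff_one]
      rcases eq_or_ne j 0 with h | h
      · simp [h]
      · simp [h]; positivity
    | succ l ih =>
      intro j hj
      rw [pow_succ', PowerSeries.coeff_mul]
      apply IsUltrametricDist.norm_sum_le_of_forall_le_of_nonneg (by positivity)
      intro x hx
      rw [Finset.HasAntidiagonal.mem_antidiagonal] at hx
      rcases Nat.eq_zero_or_pos x.1 with h0 | h1
      · simp only [PowerSeries.coeff_mk, h0, hc0, zero_mul, norm_zero]
        positivity
      · rcases lt_or_ge x.2 l with h2 | h2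
        · rw [hzero l x.2 h2, mul_zero, norm_zero]; positivity
        · rw [norm_mul, PowerSeries.coeff_mk]
          calc ‖c x.1‖ * ‖(PowerSeries.coeff (R := K) x.2) ((PowerSeries.mk c) ^ l)‖
              ≤ a ^ (x.1 - 1) * a ^ (x.2 - l) :=
                mul_le_mul (hci x.1 h1) (ih x.2 h2) (norm_nonneg _) (by positivity)
            _ = a ^ (j - (l + 1)) := by rw [← pow_add]; congr 1; omega
  -- leading coefficient of f^l
  have hlead : ∀ l : ℕ, (PowerSeries.coeff (R := K) l) ((PowerSeries.mk c) ^ l) = lam ^ l := by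
    intro l
    induction l with
    | zero => simp
    | succ l ih =>
      rw [pow_succ', PowerSeries.coeff_mul]
      rw [Finset.sum_eq_single (1, l)]
      · simp [PowerSeries.coeff_mk, hc1, ih, pow_succ, mul_comm]
      · intro x hx hne
        rw [Finset.HasAntidiagonal.mem_antidiagonal] at hx
        rcases Nat.eq_zero_or_pos x.1 with h0 | h1
        · simp [PowerSeries.coeff_mk, h0, hc0]
        · rcases eq_or_lt_of_le (by omega : 1 ≤ x.1) with h1' | h1'
          · exfalso; apply hne
            have : x.2 = l := by omega
            cases x; simp_all
          · rw [hzero l x.2 (by omega), mul_zero]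
      · intro h
        exfalso; apply h
        rw [Finset.HasAntidiagonal.mem_antidiagonal]
        omega
  -- main claim, for all k ≥ 1, by strong induction
  have main : ∀ k : ℕ, 1 ≤ k →
      ‖b k‖ ≤ a ^ (k - 1) / ∏ n ∈ Finset.Icc 1 (k - 1), ‖1 - lam ^ n‖ := by
    intro k
    induction k using Nat.strong_induction_on with
    | _ k ih =>
      intro hk1
      rcases eq_or_lt_of_le hk1 with h1 | h2
      · rw [← h1]
        simp [hb1]
      · have hk2 : 2 ≤ k := h2
        have hs := hschroder k
        rw [Finset.sum_range_succ, hlead k] at hs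
        have key : (lam - lam ^ k) * b k
            = ∑ l ∈ Finset.range k, b l * (PowerSeries.coeff (R := K) k) ((PowerSeries.mk c) ^ l) := by
          linear_combination -hs
        set C : ℝ := a ^ (k - 1) / ∏ n ∈ Finset.Icc 1 (k - 2), ‖1 - lam ^ n‖ with hC
        have hCpos : 0 ≤ C := by
          apply div_nonneg (by positivity) (le_of_lt (hprod_pos _))
        have hnorm : ‖∑ l ∈ Finset.range k,
            b l * (PowerSeries.coeff (R := K) k) ((PowerSeries.mk c) ^ l)‖ ≤ C := by
          apply IsUltrametricDist.norm_sum_le_of_forall_le_of_nonneg hCpos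
          intro l hl
          rw [Finset.mem_range] at hl
          rcases Nat.eq_zero_or_pos l with h0 | h1
          · simp [h0, hb0, hCpos]
          · rw [norm_mul]
            have hb_le : ‖b l‖ ≤ a ^ (l - 1) / ∏ n ∈ Finset.Icc 1 (l - 1), ‖1 - lam ^ n‖ :=
              ih l hl h1
            have hcf : ‖(PowerSeries.coeff (R := K) k) ((PowerSeries.mk c) ^ l)‖ ≤ a ^ (k - l) :=
              hbound l k (le_of_lt hl)
            calc ‖b l‖ * ‖(PowerSeries.coeff (R := K) k) ((PowerSeries.mk c) ^ l)‖
                ≤ (a ^ (l - 1) / ∏ n ∈ Finset.Icc 1 (l - 1), ‖1 - lam ^ n‖) * a ^ (k - l) :=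
                  mul_le_mul hb_le hcf (norm_nonneg _)
                    (div_nonneg (by positivity) (le_of_lt (hprod_pos _)))
              _ = a ^ (k - 1) / ∏ n ∈ Finset.Icc 1 (l - 1), ‖1 - lam ^ n‖ := by
                  rw [div_mul_eq_mul_div, ← pow_add]
                  congr 2
                  omega
              _ ≤ C := by
                  rw [hC]
                  exact div_le_div_of_nonneg_left (by positivity) (hprod_pos _)
                    (hprod_anti (l - 1) (k - 2) (by omega))
        have hnl : ‖lam - lam ^ k‖ = ‖1 - lam ^ (k - 1)‖ := by
          have : lam - lam ^ k = lam * (1 - lam ^ (k - 1)) := by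
            rw [mul_sub, mul_one, ← pow_succ']
            congr 2
            omega
          rw [this, norm_mul, hlam, one_mul]
        have hkey_norm : ‖1 - lam ^ (k - 1)‖ * ‖b k‖ ≤ C := by
          rw [← hnl, ← norm_mul, key]
          exact hnorm
        have hpos : 0 < ‖1 - lam ^ (k - 1)‖ := hfac_pos (k - 1) (by omega)
        have hfinal : ‖b k‖ ≤ C / ‖1 - lam ^ (k - 1)‖ := by
          rw [le_div_iff₀ hpos]
          rw [mul_comm] at hkey_norm
          exact hkey_norm
        refine hfinal.trans (le_of_eq ?_)
        rw [hC, div_div]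
        congr 1
        have hk1' : k - 1 = (k - 2) + 1 := by omega
        rw [hk1', Finset.prod_Icc_succ_top (by omega)]
  intro k hk
  exact main k (by omega)
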